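/- Let W and B be unitary n×n complex matrices with B W Bᴴ = W⁻¹. Let ε ∈ ℝ, let H be Hermitian with all eigenvalues in the open interval (ε, ε + 2π) and exp(iH) = W, and let H′ be Hermitian with all eigenvalues in the open interval (−ε, −ε + 2π) and exp(iH′) = W. Then B H Bᴴ = 2π·1 − H′. (The reflection-symmetry constraint B H^ε_W Bᴴ = −H^{−ε}_W + 2π·1 on the Wannier Hamiltonian.) -/

import Mathlib

open Matrix Polynomial

/-- Injectivity of `λ ↦ exp (I λ)` on an open interval of length `2π`. -/
lemma expI_injOn {c x y : ℝ} (hx : x ∈ Set.Ioo c (c + 2 * Real.pi))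
    (hy : y ∈ Set.Ioo c (c + 2 * Real.pi))
    (h : Complex.exp (Complex.I * x) = Complex.exp (Complex.I * y)) : x = y := by
  rw [Complex.exp_eq_exp_iff_exists_int] at h
  obtain ⟨k, hk⟩ := h
  have hI : (Complex.I : ℂ) ≠ 0 := Complex.I_ne_zero
  have h1 : (x : ℂ) = y + k * (2 * Real.pi) := by
    apply mul_left_cancel₀ hI
    rw [hk]; push_cast; ring
  have h2 : x = y + k * (2 * Real.pi) := by exact_mod_cast h1
  have hπ : (0 : ℝ) < 2 * Real.pi := by positivity
  have hk0 : k = 0 := by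
    rcases lt_trichotomy k 0 with hlt | heq | hgt
    · exfalso
      have : (k : ℝ) ≤ -1 := by exact_mod_cast Int.le_sub_one_of_lt hlt
      nlinarith [hx.1, hx.2, hy.1, hy.2]
    · exact heq
    · exfalso
      have : (1 : ℝ) ≤ (k : ℝ) := by exact_mod_cast hgt
      nlinarith [hx.1, hx.2, hy.1, hy.2]
  rw [hk0] at h2; simpa using h2

lemma isUnit_of_conjTranspose_mul {n : ℕ} (U : Matrix (Fin n) (Fin n) ℂ)
    (h1 : U * Uᴴ = 1) : IsUnit U := by
  rw [Matrix.isUnit_iff_isUnit_det]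
  apply IsUnit.of_mul_eq_one (Uᴴ.det)
  rw [← Matrix.det_mul, h1, Matrix.det_one]

lemma unitary_conj_pow {n : ℕ} (U M : Matrix (Fin n) (Fin n) ℂ)
    (h1 : U * Uᴴ = 1) (k : ℕ) : (U * M * Uᴴ) ^ k = U * M ^ k * Uᴴ := by
  induction k with
  | zero => simp [h1]
  | succ k ih =>
      rw [pow_succ, ih, pow_succ]
      have h2 : Uᴴ * U = 1 := mul_eq_one_comm.mp h1
      calc U * M ^ k * Uᴴ * (U * M * Uᴴ) = U * M ^ k * (Uᴴ * U) * M * Uᴴ := by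
            noncomm_ring
        _ = U * (M ^ k * M) * Uᴴ := by rw [h2]; noncomm_ring

lemma aeval_unitary_conj {n : ℕ} (U M : Matrix (Fin n) (Fin n) ℂ)
    (h1 : U * Uᴴ = 1) (p : ℂ[X]) :
    Polynomial.aeval (U * M * Uᴴ) p = U * Polynomial.aeval M p * Uᴴ := by
  induction p using Polynomial.induction_on' with
  | add p q hp hq => rw [map_add, map_add, hp, hq, Matrix.mul_add, Matrix.add_mul]
  | monomial k a =>
      rw [aeval_monomial, aeval_monomial, unitary_conj_pow U M h1 k,
        Algebra.algebraMap_eq_smul_one, smul_mul_assoc, one_mul,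
        smul_mul_assoc, one_mul, Matrix.mul_smul, Matrix.smul_mul]

lemma aeval_diagonal {n : ℕ} (d : Fin n → ℂ) (p : ℂ[X]) :
    Polynomial.aeval (diagonal d) p = diagonal (fun i => p.eval (d i)) := by
  induction p using Polynomial.induction_on' with
  | add p q hp hq =>
      rw [map_add, hp, hq, Matrix.diagonal_add]
      congr 1; funext i; simp
  | monomial k a =>
      rw [aeval_monomial, Matrix.algebraMap_eq_diagonal, Matrix.diagonal_pow,
        Matrix.diagonal_mul_diagonal]
      congr 1; funext i; simp [eval_monomial]

lemma exp_unitary_conj_diagonal {n : ℕ} (U : Matrix (Fin n) (Fin n) ℂ)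
    (h1 : U * Uᴴ = 1) (d : Fin n → ℂ) :
    NormedSpace.exp (U * diagonal d * Uᴴ)
      = U * diagonal (fun i => Complex.exp (d i)) * Uᴴ := by
  have hU : IsUnit U := isUnit_of_conjTranspose_mul U h1
  have hinv : U⁻¹ = Uᴴ := Matrix.inv_eq_right_inv h1
  have hd : NormedSpace.exp d = fun i => Complex.exp (d i) := by
    rw [Pi.exp_def]
    funext i
    rw [Complex.exp_eq_exp_ℂ]
  rw [← hinv, Matrix.exp_conj U (diagonal d) hU, Matrix.exp_diagonal, hd]

/-- Uniqueness of the branch-cut logarithm, in diagonalized form. -/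
lemma log_branch_uniq {n : ℕ} (c : ℝ) (U V : Matrix (Fin n) (Fin n) ℂ)
    (hU1 : U * Uᴴ = 1) (hV1 : V * Vᴴ = 1)
    (l m : Fin n → ℝ) (hl : ∀ i, l i ∈ Set.Ioo c (c + 2 * Real.pi))
    (hm : ∀ i, m i ∈ Set.Ioo c (c + 2 * Real.pi))
    (hexp : U * diagonal (fun i => Complex.exp (Complex.I * l i)) * Uᴴ
          = V * diagonal (fun i => Complex.exp (Complex.I * m i)) * Vᴴ) :
    U * diagonal (fun i => (l i : ℂ)) * Uᴴ = V * diagonal (fun i => (m i : ℂ)) * Vᴴ := by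
  classical
  set s : Finset ℂ :=
    (Finset.univ.image fun i => Complex.exp (Complex.I * l i)) ∪
    (Finset.univ.image fun i => Complex.exp (Complex.I * m i)) with hs
  set f : ℂ → ℂ := fun z =>
    if h : ∃ i, Complex.exp (Complex.I * l i) = z then ((l h.choose : ℝ) : ℂ)
    else if h : ∃ i, Complex.exp (Complex.I * m i) = z then ((m h.choose : ℝ) : ℂ)
    else 0 with hf
  set p : ℂ[X] := Lagrange.interpolate s id f with hp
  have hinj : Set.InjOn (id : ℂ → ℂ) s := Function.injective_id.injOn
  have hevall : ∀ i, p.eval (Complex.exp (Complex.I * l i)) = (l i : ℂ) := by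
    intro i
    have hmem : Complex.exp (Complex.I * l i) ∈ s := by
      rw [hs]; exact Finset.mem_union_left _ (Finset.mem_image_of_mem _ (Finset.mem_univ i))
    have := Lagrange.eval_interpolate_at_node f hinj hmem
    rw [id] at this
    rw [hp, this]
    simp only [hf]
    have hex : ∃ j, Complex.exp (Complex.I * l j) = Complex.exp (Complex.I * l i) := ⟨i, rfl⟩
    rw [dif_pos hex]
    exact_mod_cast expI_injOn (hl _) (hl i) hex.choose_spec
  have hevalm : ∀ i, p.eval (Complex.exp (Complex.I * m i)) = (m i : ℂ) := by
    intro i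
    have hmem : Complex.exp (Complex.I * m i) ∈ s := by
      rw [hs]; exact Finset.mem_union_right _ (Finset.mem_image_of_mem _ (Finset.mem_univ i))
    have := Lagrange.eval_interpolate_at_node f hinj hmem
    rw [id] at this
    rw [hp, this]
    simp only [hf]
    by_cases hex : ∃ j, Complex.exp (Complex.I * l j) = Complex.exp (Complex.I * m i)
    · rw [dif_pos hex]
      exact_mod_cast expI_injOn (hl _) (hm i) hex.choose_spec
    · rw [dif_neg hex]
      have hex' : ∃ j, Complex.exp (Complex.I * m j) = Complex.exp (Complex.I * m i) := ⟨i, rfl⟩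
      rw [dif_pos hex']
      exact_mod_cast expI_injOn (hm _) (hm i) hex'.choose_spec
  have key := congrArg (fun M => Polynomial.aeval M p) hexp
  rw [aeval_unitary_conj U _ hU1 p, aeval_unitary_conj V _ hV1 p,
    aeval_diagonal, aeval_diagonal] at key
  have hld : (fun i => p.eval (Complex.exp (Complex.I * l i))) = fun i => (l i : ℂ) := by
    funext i; exact hevall i
  have hmd : (fun i => p.eval (Complex.exp (Complex.I * m i))) = fun i => (m i : ℂ) := by
    funext i; exact hevalm i
  rw [hld, hmd] at key
  exact key

set_option maxHeartbeats 1600000 in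
/-- If `B W Bᴴ = W⁻¹` for unitary `W, B`, and `H`, `H′` are Hermitian
branch-cut logarithms of `W` with eigenvalues in `(ε, ε + 2π)` and `(-ε, -ε + 2π)`
respectively, then `B H Bᴴ = 2π·1 - H′`. -/
theorem type_II_QTI_stmt9 (n : ℕ) (W B : Matrix (Fin n) (Fin n) ℂ)
    (hW : Wᴴ * W = 1) (hB : Bᴴ * B = 1)
    (hWB : B * W * Bᴴ = W⁻¹) (ε : ℝ)
    (H H' : Matrix (Fin n) (Fin n) ℂ)
    (hH : H.IsHermitian) (hH' : H'.IsHermitian)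
    (hHe : ∀ i, hH.eigenvalues i ∈ Set.Ioo ε (ε + 2 * Real.pi))
    (hH'e : ∀ i, hH'.eigenvalues i ∈ Set.Ioo (-ε) (-ε + 2 * Real.pi))
    (hHexp : NormedSpace.exp (Complex.I • H) = W)
    (hH'exp : NormedSpace.exp (Complex.I • H') = W) :
    B * H * Bᴴ = ((2 * Real.pi : ℝ) : ℂ) • (1 : Matrix (Fin n) (Fin n) ℂ) - H' := by
  classical
  set U : Matrix (Fin n) (Fin n) ℂ := (hH.eigenvectorUnitary : Matrix (Fin n) (Fin n) ℂ)
  set V : Matrix (Fin n) (Fin n) ℂ := (hH'.eigenvectorUnitary : Matrix (Fin n) (Fin n) ℂ)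
  set l : Fin n → ℝ := hH.eigenvalues
  set m : Fin n → ℝ := hH'.eigenvalues
  have hU1 : U * Uᴴ = 1 := by
    have h := Matrix.mem_unitaryGroup_iff.mp hH.eigenvectorUnitary.2
    simpa [Matrix.star_eq_conjTranspose] using h
  have hV1 : V * Vᴴ = 1 := by
    have h := Matrix.mem_unitaryGroup_iff.mp hH'.eigenvectorUnitary.2
    simpa [Matrix.star_eq_conjTranspose] using h
  have hB1 : B * Bᴴ = 1 := mul_eq_one_comm.mp hB
  have hHdec : H = U * diagonal (fun i => (l i : ℂ)) * Uᴴ := by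
    have := hH.spectral_theorem
    simpa [U, l, Function.comp_def, Matrix.star_eq_conjTranspose] using this
  have hH'dec : H' = V * diagonal (fun i => (m i : ℂ)) * Vᴴ := by
    have := hH'.spectral_theorem
    simpa [V, m, Function.comp_def, Matrix.star_eq_conjTranspose] using this
  -- smul into diagonal
  have hsmul : ∀ (X : Matrix (Fin n) (Fin n) ℂ) (d : Fin n → ℂ),
      Complex.I • (X * diagonal d * Xᴴ) = X * diagonal (fun i => Complex.I * d i) * Xᴴ := by
    intro X d
    have h : (fun i => Complex.I * d i) = Complex.I • d := rfl
    rw [h, Matrix.diagonal_smul, Matrix.mul_smul, Matrix.smul_mul]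
  have hWU : W = U * diagonal (fun i => Complex.exp (Complex.I * l i)) * Uᴴ := by
    rw [← hHexp, hHdec, hsmul, exp_unitary_conj_diagonal U hU1]
  have hWV : W = V * diagonal (fun i => Complex.exp (Complex.I * m i)) * Vᴴ := by
    rw [← hH'exp, hH'dec, hsmul, exp_unitary_conj_diagonal V hV1]
  -- W is invertible
  have hWunit : IsUnit W := isUnit_of_conjTranspose_mul W (mul_eq_one_comm.mp hW)
  have hWdet : IsUnit W.det := (Matrix.isUnit_iff_isUnit_det W).mp hWunit
  have hWWinv : W * W⁻¹ = 1 := Matrix.mul_nonsing_inv W hWdet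
  -- B W⁻¹ Bᴴ = W
  have hBW : B * W⁻¹ * Bᴴ = W := by
    have h0 : (B * W * Bᴴ) * (B * W⁻¹ * Bᴴ) = 1 := by
      calc (B * W * Bᴴ) * (B * W⁻¹ * Bᴴ) = B * W * (Bᴴ * B) * W⁻¹ * Bᴴ := by noncomm_ring
        _ = B * (W * W⁻¹) * Bᴴ := by rw [hB]; noncomm_ring
        _ = 1 := by rw [hWWinv, mul_one, hB1]
    have h2 := Matrix.inv_eq_right_inv h0
    rw [hWB, Matrix.nonsing_inv_nonsing_inv W hWdet] at h2
    exact h2.symm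
  -- reflected eigenvalue list
  set m' : Fin n → ℝ := fun i => 2 * Real.pi - l i with hm'def
  have hm' : ∀ i, m' i ∈ Set.Ioo (-ε) (-ε + 2 * Real.pi) := by
    intro i
    have h := hHe i
    exact ⟨by simp only [hm'def]; linarith [h.2], by simp only [hm'def]; linarith [h.1]⟩
  have hBU1 : (B * U) * (B * U)ᴴ = 1 := by
    rw [Matrix.conjTranspose_mul]
    calc B * U * (Uᴴ * Bᴴ) = B * (U * Uᴴ) * Bᴴ := by noncomm_ring
      _ = 1 := by rw [hU1, mul_one, hB1]
  -- exp of reflected phases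
  have hexp_m' : (fun i => Complex.exp (Complex.I * (m' i : ℝ)))
      = fun i => Complex.exp (-(Complex.I * (l i : ℝ))) := by
    funext i
    rw [show (Complex.I * ((m' i : ℝ) : ℂ)) = 2 * Real.pi * Complex.I + -(Complex.I * l i) by
      simp only [hm'def]; push_cast; ring]
    rw [Complex.exp_add, Complex.exp_two_pi_mul_I, one_mul]
  -- U diag(exp(-I l)) Uᴴ = W⁻¹
  have hWinv : W⁻¹ = U * diagonal (fun i => Complex.exp (-(Complex.I * l i))) * Uᴴ := by
    apply Matrix.inv_eq_right_inv
    rw [hWU]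
    have hUU : Uᴴ * U = 1 := mul_eq_one_comm.mp hU1
    calc U * diagonal (fun i => Complex.exp (Complex.I * l i)) * Uᴴ *
          (U * diagonal (fun i => Complex.exp (-(Complex.I * l i))) * Uᴴ)
        = U * (diagonal (fun i => Complex.exp (Complex.I * l i)) * (Uᴴ * U) *
            diagonal (fun i => Complex.exp (-(Complex.I * l i)))) * Uᴴ := by noncomm_ring
      _ = U * (diagonal (fun i => Complex.exp (Complex.I * l i)) *
            diagonal (fun i => Complex.exp (-(Complex.I * l i)))) * Uᴴ := by
            rw [hUU, mul_one]
      _ = 1 := by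
            rw [Matrix.diagonal_mul_diagonal]
            have : (fun i => Complex.exp (Complex.I * l i) * Complex.exp (-(Complex.I * l i)))
                = fun _ => (1 : ℂ) := by
              funext i; rw [← Complex.exp_add]; simp
            rw [this, Matrix.diagonal_one, Matrix.mul_one, hU1]
  -- exp (I • K) = W in decomposed form
  have hexpK : (B * U) * diagonal (fun i => Complex.exp (Complex.I * (m' i : ℝ))) * (B * U)ᴴ
      = W := by
    rw [hexp_m', Matrix.conjTranspose_mul, ← hBW, hWinv]
    noncomm_ring
  -- uniqueness
  have key := log_branch_uniq (-ε) (B * U) V hBU1 hV1 m' m hm' hH'e (by rw [hexpK, hWV])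
  -- unfold the left side of key
  have hdiag : diagonal (fun i => ((m' i : ℝ) : ℂ))
      = ((2 * Real.pi : ℝ) : ℂ) • (1 : Matrix (Fin n) (Fin n) ℂ)
        - diagonal (fun i => (l i : ℂ)) := by
    rw [← Matrix.diagonal_one, ← Matrix.diagonal_smul, Matrix.diagonal_sub]
    congr 1; funext i
    simp only [hm'def, Pi.smul_apply, Pi.sub_apply, smul_eq_mul, mul_one]
    push_cast; ring
  rw [hdiag, ← hH'dec, Matrix.conjTranspose_mul] at key
  have hexpand : (B * U) * (((2 * Real.pi : ℝ) : ℂ) • (1 : Matrix (Fin n) (Fin n) ℂ)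
        - diagonal (fun i => (l i : ℂ))) * (Uᴴ * Bᴴ)
      = ((2 * Real.pi : ℝ) : ℂ) • (1 : Matrix (Fin n) (Fin n) ℂ) - B * H * Bᴴ := by
    rw [Matrix.mul_sub, Matrix.sub_mul, Matrix.mul_smul, Matrix.smul_mul, mul_one]
    have h1 : B * U * (Uᴴ * Bᴴ) = 1 := by
      calc B * U * (Uᴴ * Bᴴ) = B * (U * Uᴴ) * Bᴴ := by noncomm_ring
        _ = 1 := by rw [hU1, mul_one, hB1]
    rw [h1, hHdec]
    congr 1
    noncomm_ring
  rw [hexpand] at key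
  rw [← key, sub_sub_cancel]
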